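/- If x₀ and x₁ are positive natural numbers and x₂, x₃ are natural numbers such that x₀² + x₁² = x₂², then x₀·x₁ ≠ 2·x₃². (Equivalently: the area of a right triangle with positive integer side lengths is never the square of an integer.) -/

import Mathlib

/-- helper: odd positive integer is coprime to 2 -/
lemma odd_coprime_two {n : ℤ} (hn : n % 2 = 1) : IsCoprime n 2 := by
  rw [Int.isCoprime_iff_gcd_eq_one]
  have : Odd n := Int.odd_iff.mpr hn
  have h2 : Odd n.natAbs := Int.natAbs_odd.mpr this
  simpa [Int.gcd] using (Nat.coprime_two_right.mpr h2)

set_option maxHeartbeats 1000000 in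
lemma descent_aux (x m n : ℤ) (hgcd : Int.gcd m n = 1) (hm : 0 < m) (hn : 0 < n)
    (hm2 : m % 2 = 0) (h2 : ∃ y1 : ℤ, m * n = 2 * y1 ^ 2)
    (hx2 : x ^ 2 = m ^ 2 + n ^ 2) :
    ∃ e f s : ℤ, f ≠ 0 ∧ s ≠ 0 ∧ e ^ 4 = f ^ 4 + s ^ 2 ∧ e.natAbs < x.natAbs := by
  obtain ⟨y1, hy1⟩ := h2
  obtain ⟨m1, rfl⟩ : (2:ℤ) ∣ m := Int.dvd_of_emod_eq_zero hm2
  have hm1 : 0 < m1 := by linarith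
  -- n is odd
  have hnodd : n % 2 = 1 := by
    rcases Int.emod_two_eq_zero_or_one n with h | h
    · exfalso
      have : (2:ℤ) ∣ Int.gcd (2*m1) n := Int.dvd_coe_gcd ⟨m1, rfl⟩ (Int.dvd_of_emod_eq_zero h)
      rw [hgcd] at this; norm_num at this
    · exact h
  have hm1n : Int.gcd m1 n = 1 :=
    Nat.eq_one_of_dvd_one (hgcd ▸ Int.gcd_dvd_gcd_of_dvd_left n ⟨2, mul_comm 2 m1⟩)
  have hm1ny : m1 * n = y1 ^ 2 := by linarith
  obtain ⟨r, hr⟩ := Int.sq_of_gcd_eq_one hm1n hm1ny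
  have hr : m1 = r ^ 2 := by
    rcases hr with h | h
    · exact h
    · exfalso; nlinarith [sq_nonneg r]
  have hns : ∃ s : ℤ, n = s ^ 2 := by
    rw [mul_comm] at hm1ny
    rw [Int.gcd_comm] at hm1n
    obtain ⟨s, hs⟩ := Int.sq_of_gcd_eq_one hm1n hm1ny
    rcases hs with h | h
    · exact ⟨s, h⟩
    · exfalso; nlinarith [sq_nonneg s]
  obtain ⟨s, hs⟩ := hns
  have hxne : x ≠ 0 := by intro h0; rw [h0] at hx2; nlinarith
  -- pythagorean triple (n, 2*m1, |x|)
  have ht : PythagoreanTriple n (2 * m1) |x| := by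
    have : |x| * |x| = x * x := by rw [← abs_mul, abs_mul_self]
    unfold PythagoreanTriple
    rw [this]; nlinarith
  have hgc : Int.gcd n (2 * m1) = 1 := by
    rw [Int.isCoprime_iff_gcd_eq_one.symm]
    exact ((odd_coprime_two hnodd).mul_right
      (Int.isCoprime_iff_gcd_eq_one.mpr (by rwa [Int.gcd_comm] at hm1n)))
  have hxpos : 0 < |x| := abs_pos.mpr hxne
  obtain ⟨p, q, hp1, hp2, hp3, hp4, _, hp6⟩ := ht.coprime_classification' hgc hnodd hxpos
  have hpq : p * q = r ^ 2 := by nlinarith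
  have hq0 : q ≠ 0 := by rintro rfl; nlinarith
  have hppos : 0 < p := by
    rcases lt_or_eq_of_le hp6 with h | h
    · exact h
    · exfalso; rw [← h] at hpq; simp at hpq; nlinarith
  have hpq_pos : 0 < p * q := by rw [hpq, ← hr]; exact hm1
  have hqpos : 0 < q := by nlinarith
  obtain ⟨e, he⟩ := Int.sq_of_gcd_eq_one hp4 hpq
  have he : p = e ^ 2 := by rcases he with h | h; exact h; exfalso; nlinarith [sq_nonneg e]
  rw [mul_comm] at hpq; rw [Int.gcd_comm] at hp4
  obtain ⟨f, hf⟩ := Int.sq_of_gcd_eq_one hp4 hpq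
  have hf : q = f ^ 2 := by rcases hf with h | h; exact h; exfalso; nlinarith [sq_nonneg f]
  refine ⟨e, f, s, ?_, ?_, ?_, ?_⟩
  · rintro rfl; rw [hf] at hqpos; norm_num at hqpos
  · rintro rfl; rw [hs] at hn; norm_num at hn
  · -- e^4 = f^4 + s^2 : from n = p^2 - q^2
    linear_combination -hp1 - (p + e^2)*he + (q + f^2)*hf + hs
  · -- e.natAbs < x.natAbs
    have hp2e : p ^ 2 = e ^ 4 := by rw [he]; ring
    have h1 : e ^ 4 < |x| := by linarith [hp2e, hp3, pow_pos hqpos 2]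
    have he0 : e ≠ 0 := by rintro rfl; norm_num at he; omega
    have h2 : (1:ℤ) ≤ |e| := by
      rcases abs_pos.mpr he0 with h; omega
    have h3 : |e| ≤ e ^ 4 := by
      calc |e| ≤ |e| ^ 4 := le_self_pow₀ h2 (by norm_num)
        _ = e ^ 4 := by rw [pow_abs, abs_of_nonneg (by positivity : (0:ℤ) ≤ e ^ 4)]
    have : |e| < |x| := lt_of_le_of_lt h3 h1
    rwa [Int.abs_eq_natAbs, Int.abs_eq_natAbs, Int.ofNat_lt] at this

set_option maxHeartbeats 1000000 in
/-- No solutions to `x^4 = y^4 + z^2` with `y, z` nonzero. -/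
lemma no_fermat_44m : ∀ N : ℕ, ∀ x y z : ℤ, x.natAbs = N → y ≠ 0 → z ≠ 0 →
    x ^ 4 ≠ y ^ 4 + z ^ 2 := by
  intro N
  induction N using Nat.strong_induction_on with
  | _ N IH =>
  intro x y z hN hy hz heq
  have hx : x ≠ 0 := by
    rintro rfl
    have h1 : 0 < y ^ 4 + z ^ 2 := by positivity
    simp at heq; omega
  -- WLOG z positive
  wlog hzpos : 0 < z generalizing z
  · exact this (-z) (by simpa using hz) (by linear_combination heq) (by omega)
  -- reduce to coprime case
  by_cases hg : Int.gcd x y = 1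
  case neg =>
    -- divide out by the gcd
    have hg0 : Int.gcd x y ≠ 0 := fun h => hy (Int.natAbs_eq_zero.mp (Nat.eq_zero_of_gcd_eq_zero_right h))
    set g : ℤ := (Int.gcd x y : ℤ) with hgdef
    have hg1 : 1 < Int.gcd x y := by omega
    have hgz : g ≠ 0 := Int.natCast_ne_zero.mpr hg0
    obtain ⟨x1, hx1⟩ : g ∣ x := Int.gcd_dvd_left _ _
    obtain ⟨y1, hy1⟩ : g ∣ y := Int.gcd_dvd_right _ _
    have hdz : g ^ 2 ∣ z := by
      rw [← Int.pow_dvd_pow_iff (two_ne_zero), ← pow_mul]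
      refine ⟨x1 ^ 4 - y1 ^ 4, ?_⟩
      have : z ^ 2 = x ^ 4 - y ^ 4 := by linarith
      rw [this, hx1, hy1]; ring
    obtain ⟨z1, hz1⟩ := hdz
    have heq1 : x1 ^ 4 = y1 ^ 4 + z1 ^ 2 := by
      have h4 : g ^ 4 * x1 ^ 4 = g ^ 4 * (y1 ^ 4 + z1 ^ 2) := by
        rw [hx1, hy1, hz1] at heq
        ring_nf at heq ⊢
        linarith
      exact mul_left_cancel₀ (pow_ne_zero 4 hgz) h4
    have hy1' : y1 ≠ 0 := by rintro rfl; simp at hy1; exact hy hy1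
    have hz1' : z1 ≠ 0 := by rintro rfl; simp at hz1; exact hz hz1
    have hx1' : x1 ≠ 0 := by rintro rfl; simp at hx1; exact hx hx1
    have hlt : x1.natAbs < N := by
      have : x.natAbs = g.natAbs * x1.natAbs := by rw [hx1, Int.natAbs_mul]
      have hgn : g.natAbs = Int.gcd x y := by simp [hgdef]
      have h1 : 1 ≤ x1.natAbs := Nat.one_le_iff_ne_zero.mpr (Int.natAbs_ne_zero.mpr hx1')
      rw [← hN, this, hgn]
      exact (lt_mul_iff_one_lt_left (by omega)).mpr hg1
    exact IH _ hlt x1 y1 z1 rfl hy1' hz1' heq1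
  case pos =>
  -- x is odd
  have hxodd : x % 2 = 1 := by
    rcases Int.emod_two_eq_zero_or_one x with h | h
    · exfalso
      have hyodd : y % 2 = 1 := by
        rcases Int.emod_two_eq_zero_or_one y with h' | h'
        · exfalso
          have : (2:ℤ) ∣ Int.gcd x y :=
            Int.dvd_coe_gcd (Int.dvd_of_emod_eq_zero h) (Int.dvd_of_emod_eq_zero h')
          rw [hg] at this; norm_num at this
        · exact h'
      obtain ⟨k, hk⟩ := Int.dvd_of_emod_eq_zero h
      obtain ⟨l, hl⟩ : (2:ℤ) ∣ (y - 1) := Int.dvd_of_emod_eq_zero (by omega)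
      have hy' : y = 2 * l + 1 := by omega
      have key : ∀ a b c : ZMod 4, (2 * a) ^ 4 ≠ (2 * b + 1) ^ 4 + c ^ 2 := by decide
      apply key (k : ZMod 4) (l : ZMod 4) (z : ZMod 4)
      have : ((x ^ 4 : ℤ) : ZMod 4) = ((y ^ 4 + z ^ 2 : ℤ) : ZMod 4) := by rw [heq]
      rw [hk, hy'] at this
      push_cast at this ⊢
      exact this
    · exact h
  -- coprimality of y^2 and z
  have hco : IsCoprime x y := Int.isCoprime_iff_gcd_eq_one.mpr hg
  have hyz : Int.gcd (y ^ 2) z = 1 := by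
    rw [← Int.isCoprime_iff_gcd_eq_one]
    have h1 : IsCoprime (y ^ 2) (x ^ 4) := (hco.symm.pow : IsCoprime (y ^ 2) (x ^ 4))
    have h2 : IsCoprime (y ^ 2) (x ^ 4 + y ^ 2 * (-(y ^ 2))) := h1.add_mul_left_right _
    have h3 : IsCoprime (y ^ 2) (z ^ 2) := by
      convert h2 using 2
      linarith
    exact (IsCoprime.pow_right_iff (by norm_num)).mp h3
  -- parity cases on y
  rcases Int.emod_two_eq_zero_or_one y with hyev | hyodd
  · -- y even, so z odd; use triple (z, y^2, x^2)
    have hzodd : z % 2 = 1 := by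
      obtain ⟨k, hk⟩ := Int.dvd_of_emod_eq_zero hyev
      rcases Int.emod_two_eq_zero_or_one z with h' | h'
      · exfalso
        obtain ⟨l, hl⟩ := Int.dvd_of_emod_eq_zero h'
        obtain ⟨j, hj⟩ : (2:ℤ) ∣ (x - 1) := Int.dvd_of_emod_eq_zero (by omega)
        have hx' : x = 2 * j + 1 := by omega
        have key : ∀ a b c : ZMod 2, (2 * a + 1) ^ 4 ≠ (2 * b) ^ 4 + (2 * c) ^ 2 := by decide
        apply key (j : ZMod 2) (k : ZMod 2) (l : ZMod 2)
        have : ((x ^ 4 : ℤ) : ZMod 2) = ((y ^ 4 + z ^ 2 : ℤ) : ZMod 2) := by rw [heq]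
        rw [hx', hk, hl] at this
        push_cast at this ⊢
        exact this
      · exact h'
    have ht : PythagoreanTriple z (y ^ 2) (x ^ 2) := by
      unfold PythagoreanTriple
      linear_combination -heq
    have hgc : Int.gcd z (y ^ 2) = 1 := by rwa [Int.gcd_comm]
    have hx2pos : 0 < x ^ 2 := by positivity
    obtain ⟨m, n, hp1, hp2, hp3, hp4, hp5, hp6⟩ := ht.coprime_classification' hgc hzodd hx2pos
    have hmn0 : 0 < m * n := by
      rcases (mul_pos_iff.mp (show 0 < 2 * (m * n) by
        rw [show 2 * (m * n) = 2 * m * n by ring, ← hp2]; positivity)) with h | h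
      · exact h.2
      · exfalso; omega
    have hmpos : 0 < m := lt_of_le_of_ne hp6 (by rintro rfl; simp at hmn0)
    have hnpos : 0 < n := by nlinarith [hmn0, hmpos]
    have h2mn : ∃ y1 : ℤ, m * n = 2 * y1 ^ 2 := by
      obtain ⟨y1, hy1⟩ := Int.dvd_of_emod_eq_zero hyev
      have h4 : 2 * (m * n) = 2 * (2 * y1 ^ 2) := by linear_combination (y + 2 * y1) * hy1 - hp2
      exact ⟨y1, mul_left_cancel₀ two_ne_zero h4⟩
    rcases hp5 with ⟨hme, hno⟩ | ⟨hmo, hne⟩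
    · obtain ⟨e, f, s, hf, hs, heqn, hlt⟩ := descent_aux x m n hp4 hmpos hnpos hme h2mn hp3
      exact IH _ (hN ▸ hlt) e f s rfl hf hs heqn
    · obtain ⟨e, f, s, hf, hs, heqn, hlt⟩ := descent_aux x n m
        (by rwa [Int.gcd_comm]) hnpos hmpos hne
        (by obtain ⟨y1, h'⟩ := h2mn; exact ⟨y1, by linarith [mul_comm m n ▸ h']⟩)
        (by linarith [hp3])
      exact IH _ (hN ▸ hlt) e f s rfl hf hs heqn
  · -- y odd : triple (y^2, z, x^2)
    have hy2odd : y ^ 2 % 2 = 1 := by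
      obtain ⟨l, hl⟩ : (2:ℤ) ∣ (y - 1) := Int.dvd_of_emod_eq_zero (by omega)
      have : y = 2 * l + 1 := by omega
      rw [this]; ring_nf; omega
    have ht : PythagoreanTriple (y ^ 2) z (x ^ 2) := by
      unfold PythagoreanTriple
      linear_combination -heq
    have hx2pos : 0 < x ^ 2 := by positivity
    obtain ⟨m, n, hp1, hp2, hp3, hp4, hp5, hp6⟩ := ht.coprime_classification' hyz hy2odd hx2pos
    have hn0 : n ≠ 0 := by rintro rfl; simp at hp2; exact hz hp2
    have heqn : m ^ 4 = n ^ 4 + (x * y) ^ 2 := by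
      linear_combination -(m^2+n^2) * hp1 - y^2 * hp3
    have hlt : m.natAbs < N := by
      rw [← hN]
      apply Int.natAbs_lt_iff_sq_lt.mpr
      have : 0 < n ^ 2 := by positivity
      nlinarith [hp3]
    exact IH _ hlt m n (x * y) rfl hn0 (mul_ne_zero hx hy) heqn

/-- No positive natural satisfies `a^2 = 2 * d^2`. -/
lemma nat_sq_ne_two_sq : ∀ a : ℕ, ∀ d : ℕ, a ^ 2 = 2 * d ^ 2 → a = 0 := by
  intro a
  induction a using Nat.strong_induction_on with
  | _ a IH =>
  intro d h
  rcases Nat.eq_zero_or_pos a with h0 | hpos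
  · exact h0
  exfalso
  have hd : d < a := by nlinarith
  have hda : d ≠ 0 → False := by
    intro hd0
    have h2 : d ^ 2 = 2 * (a / 2) ^ 2 := by
      have ha2 : 2 ∣ a := by
        have : 2 ∣ a ^ 2 := ⟨d ^ 2, h⟩
        exact (Nat.Prime.dvd_of_dvd_pow Nat.prime_two this)
      obtain ⟨a1, rfl⟩ := ha2
      rw [Nat.mul_div_cancel_left a1 (by norm_num)]
      nlinarith [h]
    have := IH d hd (a / 2) h2
    exact hd0 this
  have hd0 : d = 0 := by by_contra hc; exact hda hc
  subst hd0
  simp at h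
  omega

theorem fermat_right_triangle_area_not_square
    (x0 x1 x2 x3 : ℕ) (hx0 : 0 < x0) (hx1 : 0 < x1)
    (h : x0 ^ 2 + x1 ^ 2 = x2 ^ 2) :
    x0 * x1 ≠ 2 * x3 ^ 2 := by
  intro heq
  -- x3 ≠ 0
  have hx3 : x3 ≠ 0 := by
    rintro rfl
    simp at heq
    rcases heq with h' | h' <;> omega
  -- x0 ≠ x1
  have hne : x0 ≠ x1 := by
    rintro rfl
    have : x0 ^ 2 = 2 * x3 ^ 2 := by nlinarith [heq]
    have := nat_sq_ne_two_sq x0 x3 this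
    omega
  -- move to ℤ
  have hZ : (x0:ℤ) ^ 2 + (x1:ℤ) ^ 2 = (x2:ℤ) ^ 2 := by exact_mod_cast h
  have heqZ : (x0:ℤ) * (x1:ℤ) = 2 * (x3:ℤ) ^ 2 := by exact_mod_cast heq
  have hzne : ((x0:ℤ) ^ 2 - (x1:ℤ) ^ 2) ≠ 0 := by
    intro h0
    have : (x0:ℤ) ^ 2 = (x1:ℤ) ^ 2 := by linarith
    have : (x0:ℤ) = (x1:ℤ) := by
      have h1 : (0:ℤ) ≤ (x0:ℤ) := Int.natCast_nonneg _
      have h2 : (0:ℤ) ≤ (x1:ℤ) := Int.natCast_nonneg _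
      nlinarith
    exact hne (by exact_mod_cast this)
  have hy : (2 * (x3:ℤ)) ≠ 0 := by
    simp
    exact_mod_cast hx3
  apply no_fermat_44m ((x2:ℤ).natAbs) (x2:ℤ) (2 * (x3:ℤ)) ((x0:ℤ)^2 - (x1:ℤ)^2) rfl hy hzne
  linear_combination (-((x2:ℤ)^2 + (x0:ℤ)^2 + (x1:ℤ)^2)) * hZ + (4*(x0:ℤ)*(x1:ℤ) + 8*(x3:ℤ)^2) * heqZ
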